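/- Let G = (V, E) and G′ = (V, E′) be distinct graphs on the same finite vertex set V (so E ≠ E′, and max(|E|, |E′|) ≥ 1). Then for every partition 𝒜 of V, |q_𝒜(G) − q_𝒜(G′)| < 2·|E △ E′| / max(|E|, |E′|), and moreover |q*(G) − q*(G′)| < 2·|E △ E′| / max(|E|, |E′|), where E △ E′ denotes the symmetric difference of the edge sets. -/

import Mathlib

open Finset
open scoped Classical

/-- The number of edges of a finite graph. -/
noncomputable def edgeCount {V : Type} [Fintype V] [DecidableEq V] (G : SimpleGraph V) : ℕ :=
  G.edgeFinset.card

/-- vol(A): the sum over vertices of A of their degree in G. -/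
noncomputable def degSum {V : Type} [Fintype V] [DecidableEq V] (G : SimpleGraph V)
    (A : Finset V) : ℕ :=
  ∑ v ∈ A, G.degree v

/-- e(A): the number of edges of G with both endpoints in A. -/
noncomputable def intEdges {V : Type} [Fintype V] [DecidableEq V] (G : SimpleGraph V)
    (A : Finset V) : ℕ :=
  (G.edgeFinset.filter (fun e => ∀ v ∈ e, v ∈ A)).card

/-- The modularity score q_𝒜(G) of a vertex partition 𝒜 of G; it is 0 if G has no edges. -/
noncomputable def modScore {V : Type} [Fintype V] [DecidableEq V] (G : SimpleGraph V)
    (P : Finpartition (univ : Finset V)) : ℝ :=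
  if edgeCount G = 0 then 0 else
    (∑ A ∈ P.parts, (intEdges G A : ℝ)) / (edgeCount G : ℝ)
      - (∑ A ∈ P.parts, (degSum G A : ℝ) ^ 2) / (4 * (edgeCount G : ℝ) ^ 2)

/-- The modularity q*(G) of a graph: the maximum of q_𝒜(G) over all vertex partitions 𝒜. -/
noncomputable def modularity {V : Type} [Fintype V] [DecidableEq V] (G : SimpleGraph V) : ℝ :=
  ⨆ P : Finpartition (univ : Finset V), modScore G P

/-- The probability that the random subgraph G_p of G (each edge of G retained
independently with probability p) satisfies the predicate Q. -/
noncomputable def subgraphProb {V : Type} [Fintype V] [DecidableEq V] (G : SimpleGraph V)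
    (p : ℝ) (Q : SimpleGraph V → Prop) : ℝ :=
  ∑ F ∈ G.edgeFinset.powerset,
    if Q (SimpleGraph.fromEdgeSet (F : Set (Sym2 V))) then
      p ^ F.card * (1 - p) ^ (G.edgeFinset.card - F.card)
    else 0

set_option linter.unusedSectionVars false

namespace Aux
variable {V : Type} [Fintype V] [DecidableEq V]

lemma degSum_eq (G : SimpleGraph V) (A : Finset V) :
    degSum G A = ∑ e ∈ G.edgeFinset, #(A.filter (fun v => v ∈ e)) := by
  unfold degSum
  have h : ∀ v : V, G.degree v = #(G.edgeFinset.filter (fun e => v ∈ e)) := by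
    intro v
    rw [← SimpleGraph.card_incidenceFinset_eq_degree, SimpleGraph.incidenceFinset_eq_filter]
  simp_rw [h, Finset.card_filter]
  exact Finset.sum_comm

lemma inside_pair {A : Finset V} {v w : V} :
    (∀ x ∈ s(v,w), x ∈ A) ↔ v ∈ A ∧ w ∈ A := by
  constructor
  · intro h; exact ⟨h v (by simp), h w (by simp)⟩
  · rintro ⟨h1, h2⟩ x hx
    rcases Sym2.mem_iff.mp hx with rfl | rfl <;> assumption

lemma card_filter_pair {v w : V} (h : v ≠ w) (A : Finset V) :
    #(A.filter (fun x => x ∈ s(v,w))) =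
      (if v ∈ A then 1 else 0) + (if w ∈ A then 1 else 0) := by
  have hset : A.filter (fun x => x ∈ s(v,w))
      = (A.filter (fun x => x = v)) ∪ (A.filter (fun x => x = w)) := by
    ext x
    simp [Sym2.mem_iff, and_or_left]
  rw [hset, Finset.card_union_of_disjoint, Finset.filter_eq', Finset.filter_eq']
  · split_ifs <;> simp
  · rw [Finset.disjoint_left]
    rintro x hx hx'
    simp only [Finset.mem_filter] at hx hx'
    exact h (hx.2 ▸ hx'.2 ▸ rfl)

lemma sum_filter_inside (P : Finpartition (univ : Finset V)) (S : Finset (Sym2 V)) :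
    ∑ A ∈ P.parts, #(S.filter (fun e => ∀ v ∈ e, v ∈ A))
      = #(S.filter (fun e => ∃ A ∈ P.parts, ∀ v ∈ e, v ∈ A)) := by
  simp_rw [Finset.card_filter]
  rw [Finset.sum_comm]
  refine Finset.sum_congr rfl fun e _ => ?_
  by_cases hex : ∃ A ∈ P.parts, ∀ v ∈ e, v ∈ A
  · obtain ⟨A₀, hA₀, hin⟩ := hex
    rw [if_pos ⟨A₀, hA₀, hin⟩, ← Finset.card_filter, Finset.card_eq_one]
    refine ⟨A₀, ?_⟩
    ext B
    simp only [Finset.mem_filter, Finset.mem_singleton]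
    constructor
    · rintro ⟨hB, hBin⟩
      exact P.eq_of_mem_parts hB hA₀ (hBin e.out.1 (Sym2.out_fst_mem e)) (hin e.out.1 (Sym2.out_fst_mem e))
    · rintro rfl; exact ⟨hA₀, hin⟩
  · rw [if_neg hex, ← Finset.card_filter, Finset.card_eq_zero, Finset.filter_eq_empty_iff]
    intro B hB hBin
    exact hex ⟨B, hB, hBin⟩

lemma intEdges_split {H K : SimpleGraph V} (h : K.edgeFinset ⊆ H.edgeFinset) (A : Finset V) :
    intEdges H A = intEdges K A
      + #((H.edgeFinset \ K.edgeFinset).filter (fun e => ∀ v ∈ e, v ∈ A)) := by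
  unfold intEdges
  simp_rw [Finset.card_filter]
  rw [← Finset.sum_sdiff h]
  omega

lemma degSum_split {H K : SimpleGraph V} (h : K.edgeFinset ⊆ H.edgeFinset) (A : Finset V) :
    degSum H A = degSum K A
      + ∑ e ∈ H.edgeFinset \ K.edgeFinset, #(A.filter (fun v => v ∈ e)) := by
  rw [degSum_eq, degSum_eq, ← Finset.sum_sdiff h]
  omega

lemma sum_intEdges_le (G : SimpleGraph V) (P : Finpartition (univ : Finset V)) :
    ∑ A ∈ P.parts, intEdges G A ≤ edgeCount G := by
  unfold intEdges edgeCount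
  rw [show (∑ A ∈ P.parts, #(G.edgeFinset.filter (fun e => ∀ v ∈ e, v ∈ A)))
      = #(G.edgeFinset.filter (fun e => ∃ A ∈ P.parts, ∀ v ∈ e, v ∈ A)) from
    sum_filter_inside P G.edgeFinset]
  exact Finset.card_filter_le _ _

lemma single_part_le (P : Finpartition (univ : Finset V)) (c : Finset V → ℕ) {A : Finset V}
    (hA : A ∈ P.parts) : c A ≤ ∑ B ∈ P.parts, c B :=
  Finset.single_le_sum (fun _ _ => Nat.zero_le _) hA

lemma degSum_le_add (G : SimpleGraph V) (A : Finset V) :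
    degSum G A ≤ edgeCount G + intEdges G A := by
  rw [degSum_eq]
  unfold edgeCount intEdges
  rw [Finset.card_eq_sum_ones G.edgeFinset, Finset.card_filter, ← Finset.sum_add_distrib]
  refine Finset.sum_le_sum fun e he => ?_
  induction e using Sym2.ind with
  | _ v w =>
    have hadj : G.Adj v w := (SimpleGraph.mem_edgeSet _).mp (SimpleGraph.mem_edgeFinset.mp he)
    rw [card_filter_pair hadj.ne]
    by_cases hv : v ∈ A <;> by_cases hw : w ∈ A <;>
      simp [hv, hw, inside_pair]

lemma part_filter (P : Finpartition (univ : Finset V)) (x : V) :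
    P.parts.filter (fun A => x ∈ A) = {P.part x} := by
  ext B
  simp only [Finset.mem_filter, Finset.mem_singleton]
  constructor
  · rintro ⟨hB, hxB⟩; exact (P.part_eq_of_mem hB hxB).symm
  · rintro rfl
    exact ⟨P.part_mem.2 (Finset.mem_univ x), P.mem_part (Finset.mem_univ x)⟩

lemma sum_indicator_part (P : Finpartition (univ : Finset V)) (x : V) (c : Finset V → ℕ) :
    ∑ A ∈ P.parts, (if x ∈ A then c A else 0) = c (P.part x) := by
  rw [← Finset.sum_filter, part_filter, Finset.sum_singleton]

lemma weighted_bound (P : Finpartition (univ : Finset V)) {H : SimpleGraph V}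
    (S : Finset (Sym2 V)) (hS : S ⊆ H.edgeFinset) (c : Finset V → ℕ) (C : ℕ)
    (hC : ∑ A ∈ P.parts, c A ≤ C) :
    ∑ A ∈ P.parts, (∑ e ∈ S, #(A.filter (fun v => v ∈ e))) * c A
      ≤ C * #S + C * #(S.filter (fun e => ∃ A ∈ P.parts, ∀ v ∈ e, v ∈ A)) := by
  have hswap : ∑ A ∈ P.parts, (∑ e ∈ S, #(A.filter (fun v => v ∈ e))) * c A
      = ∑ e ∈ S, ∑ A ∈ P.parts, #(A.filter (fun v => v ∈ e)) * c A := by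
    simp_rw [Finset.sum_mul]
    exact Finset.sum_comm
  rw [hswap, Finset.card_eq_sum_ones S, Finset.card_filter, Finset.mul_sum, Finset.mul_sum,
    ← Finset.sum_add_distrib]
  refine Finset.sum_le_sum fun e he => ?_
  induction e using Sym2.ind with
  | _ v w =>
    have hadj : H.Adj v w := (SimpleGraph.mem_edgeSet _).mp (SimpleGraph.mem_edgeFinset.mp (hS he))
    simp_rw [card_filter_pair hadj.ne, add_mul, ite_mul, one_mul, zero_mul]
    rw [Finset.sum_add_distrib, sum_indicator_part, sum_indicator_part]
    by_cases hsp : ∃ A ∈ P.parts, ∀ x ∈ s(v,w), x ∈ A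
    · rw [if_pos hsp]
      have h1 : c (P.part v) ≤ C :=
        le_trans (single_part_le P c (P.part_mem.2 (Finset.mem_univ v))) hC
      have h2 : c (P.part w) ≤ C :=
        le_trans (single_part_le P c (P.part_mem.2 (Finset.mem_univ w))) hC
      omega
    · rw [if_neg hsp]
      have hnep : P.part v ≠ P.part w := by
        intro hEq
        refine hsp ⟨P.part v, P.part_mem.2 (Finset.mem_univ v), ?_⟩
        rw [inside_pair]
        exact ⟨P.mem_part (Finset.mem_univ v), by rw [hEq]; exact P.mem_part (Finset.mem_univ w)⟩
      have hpair : c (P.part v) + c (P.part w)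
          = ∑ A ∈ ({P.part v, P.part w} : Finset (Finset V)), c A := by
        rw [Finset.sum_pair hnep]
      have hle : c (P.part v) + c (P.part w) ≤ C := by
        rw [hpair]
        refine le_trans (Finset.sum_le_sum_of_subset ?_) hC
        intro B hB
        rcases Finset.mem_insert.mp hB with rfl | hB
        · exact P.part_mem.2 (Finset.mem_univ v)
        · rw [Finset.mem_singleton.mp hB]; exact P.part_mem.2 (Finset.mem_univ w)
      omega

lemma sum_sq_degSum_le (G : SimpleGraph V) (P : Finpartition (univ : Finset V))
    (h : ∑ A ∈ P.parts, degSum G A = 2 * edgeCount G) :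
    ∑ A ∈ P.parts, (degSum G A)^2 ≤ 4 * (edgeCount G)^2 := by
  calc ∑ A ∈ P.parts, (degSum G A)^2
      ≤ ∑ A ∈ P.parts, degSum G A * (∑ B ∈ P.parts, degSum G B) := by
        refine Finset.sum_le_sum fun A hA => ?_
        rw [pow_two]
        exact Nat.mul_le_mul_left _ (single_part_le P _ hA)
    _ = (∑ A ∈ P.parts, degSum G A) * (∑ B ∈ P.parts, degSum G B) := by
        rw [← Finset.sum_mul]
    _ = 4 * (edgeCount G)^2 := by rw [h]; ring

lemma sum_degSum' (G : SimpleGraph V) (P : Finpartition (univ : Finset V)) :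
    ∑ A ∈ P.parts, degSum G A = 2 * edgeCount G := by
  unfold degSum edgeCount
  rw [show (∑ A ∈ P.parts, ∑ v ∈ A, G.degree v) = ∑ v, G.degree v by
    conv_rhs => rw [← P.biUnion_parts]
    exact (Finset.sum_biUnion P.disjoint).symm]
  exact SimpleGraph.sum_degrees_eq_twice_card_edges G

end Aux

namespace Aux
variable {V : Type} [Fintype V] [DecidableEq V]

set_option maxHeartbeats 1000000 in
lemma del (H K : SimpleGraph V) (hKH : K ≤ H) (hne : K ≠ H) (P : Finpartition (univ : Finset V)) :
    |modScore K P - modScore H P| < 2 * ((edgeCount H - edgeCount K : ℕ) : ℝ) / (edgeCount H : ℝ) := by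
  classical
  have hsub : K.edgeFinset ⊆ H.edgeFinset := SimpleGraph.edgeFinset_mono hKH
  have hssub : K.edgeFinset ⊂ H.edgeFinset :=
    hsub.ssubset_of_ne (fun hEq => hne (by rwa [SimpleGraph.edgeFinset_inj] at hEq))
  have hlt : edgeCount K < edgeCount H := Finset.card_lt_card hssub
  have hn0 : edgeCount H ≠ 0 := by unfold edgeCount at hlt ⊢; omega
  have hμpos : (0:ℝ) < (edgeCount H : ℝ) := by exact_mod_cast Nat.pos_of_ne_zero hn0
  unfold modScore
  rw [if_neg hn0]
  by_cases hK0 : edgeCount K = 0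
  · rw [if_pos hK0, hK0]
    have hEr : (0:ℝ) ≤ ∑ A ∈ P.parts, (intEdges H A : ℝ) := Finset.sum_nonneg fun _ _ => Nat.cast_nonneg _
    have hEle : ∑ A ∈ P.parts, (intEdges H A : ℝ) ≤ (edgeCount H : ℝ) := by
      exact_mod_cast sum_intEdges_le H P
    have hDr : (0:ℝ) ≤ ∑ A ∈ P.parts, (degSum H A : ℝ)^2 := Finset.sum_nonneg fun _ _ => sq_nonneg _
    have hDle : ∑ A ∈ P.parts, (degSum H A : ℝ)^2 ≤ 4*(edgeCount H : ℝ)^2 := by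
      exact_mod_cast sum_sq_degSum_le H P (sum_degSum' H P)
    have hEdiv0 : (0:ℝ) ≤ (∑ A ∈ P.parts, (intEdges H A : ℝ)) / (edgeCount H : ℝ) :=
      div_nonneg hEr hμpos.le
    have hEdiv1 : (∑ A ∈ P.parts, (intEdges H A : ℝ)) / (edgeCount H : ℝ) ≤ 1 :=
      (div_le_one hμpos).mpr hEle
    have h4pos : (0:ℝ) < 4*(edgeCount H : ℝ)^2 := mul_pos (by norm_num) (pow_pos hμpos 2)
    have hDdiv0 : (0:ℝ) ≤ (∑ A ∈ P.parts, (degSum H A : ℝ)^2) / (4*(edgeCount H : ℝ)^2) :=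
      div_nonneg hDr h4pos.le
    have hDdiv1 : (∑ A ∈ P.parts, (degSum H A : ℝ)^2) / (4*(edgeCount H : ℝ)^2) ≤ 1 :=
      (div_le_one h4pos).mpr hDle
    have h2 : 2 * ((edgeCount H - 0 : ℕ) : ℝ) / (edgeCount H : ℝ) = 2 := by
      rw [Nat.sub_zero]
      field_simp
    rw [h2, abs_lt]
    constructor <;> linarith
  · rw [if_neg hK0]
    set S : Finset (Sym2 V) := H.edgeFinset \ K.edgeFinset with hSdef
    set d := #(S.filter (fun e => ∃ A ∈ P.parts, ∀ v ∈ e, v ∈ A)) with hddef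
    have hScard : #S = edgeCount H - edgeCount K := Finset.card_sdiff_of_subset hsub
    have hdle : d ≤ edgeCount H - edgeCount K := hScard ▸ Finset.card_filter_le _ _
    have hEsplit : ∑ A ∈ P.parts, intEdges H A = ∑ A ∈ P.parts, intEdges K A + d := by
      rw [hddef, ← sum_filter_inside P S, ← Finset.sum_add_distrib]
      exact Finset.sum_congr rfl fun A _ => intEdges_split hsub A
    have hE'le : ∑ A ∈ P.parts, intEdges K A ≤ edgeCount K := sum_intEdges_le K P
    have hDsplit : ∑ A ∈ P.parts, (degSum H A)^2
        ≤ ∑ A ∈ P.parts, (degSum K A)^2 + (2*edgeCount H + 2*edgeCount K) * (#S + d) := by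
      have hWB := weighted_bound P S Finset.sdiff_subset (fun A => degSum H A + degSum K A)
        (2*edgeCount H + 2*edgeCount K)
        (le_of_eq (by rw [Finset.sum_add_distrib, sum_degSum', sum_degSum']))
      have hid : ∑ A ∈ P.parts, (degSum H A)^2
          = ∑ A ∈ P.parts, ((degSum K A)^2
            + (∑ e ∈ S, #(A.filter (fun v => v ∈ e))) * (degSum H A + degSum K A)) := by
        refine Finset.sum_congr rfl fun A _ => ?_
        rw [degSum_split hsub A]
        ring
      rw [hid, Finset.sum_add_distrib, mul_add]
      exact Nat.add_le_add_left hWB _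
    have hDmono : ∑ A ∈ P.parts, (degSum K A)^2 ≤ ∑ A ∈ P.parts, (degSum H A)^2 :=
      Finset.sum_le_sum fun A _ => Nat.pow_le_pow_left (Nat.le.intro (degSum_split hsub A).symm) 2
    have hpne : P.parts.Nonempty := by
      obtain ⟨e, he⟩ := Finset.card_pos.mp (Nat.pos_of_ne_zero hn0)
      obtain ⟨B, hB, -⟩ := P.exists_mem (Finset.mem_univ e.out.1)
      exact ⟨B, hB⟩
    obtain ⟨A₀, hA₀, hmax⟩ := Finset.exists_max_image P.parts (fun A => degSum K A) hpne
    have hDk2 : ∑ A ∈ P.parts, (degSum K A)^2 ≤ 2 * edgeCount K * degSum K A₀ := by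
      calc ∑ A ∈ P.parts, (degSum K A)^2
          ≤ ∑ A ∈ P.parts, degSum K A₀ * degSum K A := by
            refine Finset.sum_le_sum fun A hA => ?_
            rw [pow_two]
            exact Nat.mul_le_mul_right _ (hmax A hA)
        _ = degSum K A₀ * ∑ A ∈ P.parts, degSum K A := by rw [Finset.mul_sum]
        _ = 2 * edgeCount K * degSum K A₀ := by rw [sum_degSum']; ring
    have hu₀1 : 1 ≤ degSum K A₀ := by
      by_contra hc
      have h0 : ∀ A ∈ P.parts, degSum K A = 0 := fun A hA => by
        have := hmax A hA; omega
      have := sum_degSum' K P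
      rw [Finset.sum_eq_zero h0] at this
      omega
    have hu₀E' : degSum K A₀ ≤ edgeCount K + ∑ A ∈ P.parts, intEdges K A :=
      le_trans (degSum_le_add K A₀)
        (by have := single_part_le P (intEdges K) hA₀; omega)
    have hDk1 : 1 ≤ ∑ A ∈ P.parts, (degSum K A)^2 :=
      le_trans (Nat.one_le_pow 2 _ (by omega)) (single_part_le P (fun A => (degSum K A)^2) hA₀)
    -- real versions
    have hν1 : (1:ℝ) ≤ (edgeCount K : ℝ) := by
      exact_mod_cast Nat.one_le_iff_ne_zero.mpr hK0
    have hμν : (edgeCount K : ℝ) + 1 ≤ (edgeCount H : ℝ) := by exact_mod_cast hlt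
    have hκ : ((edgeCount H - edgeCount K : ℕ) : ℝ) = (edgeCount H : ℝ) - (edgeCount K : ℝ) := by
      push_cast [Nat.cast_sub hlt.le]; ring
    have hdleR : (d:ℝ) ≤ (edgeCount H : ℝ) - (edgeCount K : ℝ) := by
      rw [← hκ]; exact_mod_cast hdle
    have hd0 : (0:ℝ) ≤ (d:ℝ) := Nat.cast_nonneg d
    have hEsplitR : ∑ A ∈ P.parts, (intEdges H A : ℝ)
        = (∑ A ∈ P.parts, (intEdges K A : ℝ)) + (d:ℝ) := by exact_mod_cast hEsplit
    have hE'leR : ∑ A ∈ P.parts, (intEdges K A : ℝ) ≤ (edgeCount K : ℝ) := by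
      exact_mod_cast hE'le
    have hEk0 : (0:ℝ) ≤ ∑ A ∈ P.parts, (intEdges K A : ℝ) := Finset.sum_nonneg fun _ _ => Nat.cast_nonneg _
    have hDsplitR : ∑ A ∈ P.parts, (degSum H A : ℝ)^2
        ≤ (∑ A ∈ P.parts, (degSum K A : ℝ)^2)
          + (2*(edgeCount H : ℝ) + 2*(edgeCount K : ℝ))
            * (((edgeCount H : ℝ) - (edgeCount K : ℝ)) + (d:ℝ)) := by
      have h := hDsplit
      rw [hScard] at h
      have h' : ((∑ A ∈ P.parts, (degSum H A)^2 : ℕ) : ℝ)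
          ≤ ((∑ A ∈ P.parts, (degSum K A)^2
            + (2*edgeCount H + 2*edgeCount K) * ((edgeCount H - edgeCount K) + d) : ℕ) : ℝ) :=
        Nat.cast_le.mpr h
      push_cast [Nat.cast_sub hlt.le] at h'
      linarith [h']
    have hDmonoR : ∑ A ∈ P.parts, (degSum K A : ℝ)^2 ≤ ∑ A ∈ P.parts, (degSum H A : ℝ)^2 := by
      exact_mod_cast hDmono
    have hDk2R : ∑ A ∈ P.parts, (degSum K A : ℝ)^2
        ≤ 2 * (edgeCount K : ℝ) * (degSum K A₀ : ℝ) := by exact_mod_cast hDk2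
    have hu₀1R : (1:ℝ) ≤ (degSum K A₀ : ℝ) := by exact_mod_cast hu₀1
    have hu₀E'R : (degSum K A₀ : ℝ) ≤ (edgeCount K : ℝ) + ∑ A ∈ P.parts, (intEdges K A : ℝ) := by
      exact_mod_cast hu₀E'
    have hDk1R : (1:ℝ) ≤ ∑ A ∈ P.parts, (degSum K A : ℝ)^2 := by exact_mod_cast hDk1
    -- abbreviations
    set μ : ℝ := (edgeCount H : ℝ) with hμdef
    set ν : ℝ := (edgeCount K : ℝ) with hνdef
    set Er : ℝ := ∑ A ∈ P.parts, (intEdges H A : ℝ) with hErdef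
    set Ek : ℝ := ∑ A ∈ P.parts, (intEdges K A : ℝ) with hEkdef
    set Dr : ℝ := ∑ A ∈ P.parts, (degSum H A : ℝ)^2 with hDrdef
    set Dk : ℝ := ∑ A ∈ P.parts, (degSum K A : ℝ)^2 with hDkdef
    set u₀ : ℝ := (degSum K A₀ : ℝ) with hu₀def
    have hν0 : (0:ℝ) < ν := by linarith
    have hκ0 : (0:ℝ) < μ - ν := by linarith
    have hD4 : (0:ℝ) < 4*μ^2*ν^2 := by nlinarith [mul_pos (mul_pos hμpos hμpos) (mul_pos hν0 hν0)]
    rw [hκ, abs_sub_lt_iff]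
    constructor
    · -- modScore K − modScore H < bound
      have key2 : (μ + ν) * (2*ν^2 - Dk) < 4*μ*ν^2 := by
        rcases le_or_gt Dk (2*ν^2) with hcase | hcase
        · have ha : (0:ℝ) ≤ (μ - ν) * (2*ν^2 - Dk) :=
            mul_nonneg hκ0.le (by linarith)
          have hb : μ * 1 ≤ μ * Dk := mul_le_mul_of_nonneg_left hDk1R hμpos.le
          nlinarith [ha, hb]
        · have ha : (μ + ν) * (2*ν^2 - Dk) < 0 :=
            mul_neg_of_pos_of_neg (by linarith) (by linarith)
          have hb : (0:ℝ) < 4*μ*ν^2 := by nlinarith [mul_pos hμpos (mul_pos hν0 hν0)]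
          linarith
      have H1 : ν^2 * Dr ≤ ν^2 * (Dk + (2*μ + 2*ν) * ((μ - ν) + (d:ℝ))) :=
        mul_le_mul_of_nonneg_left hDsplitR (sq_nonneg ν)
      have h3pos : (0:ℝ) ≤ 4*μ*ν*(μ-ν) := mul_nonneg (mul_nonneg (mul_nonneg (by norm_num) hμpos.le) hν0.le) hκ0.le
      have H3 : (4*μ*ν*(μ-ν)) * Ek ≤ (4*μ*ν*(μ-ν)) * ν :=
        mul_le_mul_of_nonneg_left hE'leR h3pos
      have H4 : (0:ℝ) ≤ 2*ν^2*(μ-ν)*(d:ℝ) := mul_nonneg (mul_nonneg (mul_nonneg (by norm_num) (sq_nonneg ν)) hκ0.le) hd0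
      have H5 : (μ-ν) * ((μ + ν) * (2*ν^2 - Dk)) < (μ-ν) * (4*μ*ν^2) :=
        mul_lt_mul_of_pos_left key2 hκ0
      have hpoly2 : 4*μ^2*ν*Ek - μ^2*Dk - 4*μ*ν^2*Er + ν^2*Dr - 8*(μ-ν)*μ*ν^2 < 0 := by
        nlinarith [H1, H3, H4, H5, hEsplitR]
      have hEqL : Ek/ν - Dk/(4*ν^2) - (Er/μ - Dr/(4*μ^2))
          = (4*μ^2*ν*Ek - μ^2*Dk - 4*μ*ν^2*Er + ν^2*Dr)/(4*μ^2*ν^2) := by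
        field_simp
        ring
      rw [hEqL, div_lt_iff₀ hD4]
      have hmul : 2*(μ-ν)/μ*(4*μ^2*ν^2) = 8*(μ-ν)*μ*ν^2 := by
        field_simp
        ring
      rw [hmul]
      linarith
    · -- modScore H − modScore K < bound
      have key1 : (μ + ν) * Dk < 4*μ*ν*Ek + 4*μ*ν^2 := by
        have hposμν : (0:ℝ) ≤ μ + ν := by linarith
        have K1a : (μ+ν) * Dk ≤ (μ+ν) * (2*ν*u₀) := mul_le_mul_of_nonneg_left hDk2R hposμν
        rcases le_or_gt u₀ ν with hcase | hcase
        · have K1b : (2*ν*(μ+ν)) * u₀ ≤ (2*ν*(μ+ν)) * ν :=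
            mul_le_mul_of_nonneg_left hcase (mul_nonneg (mul_nonneg (by norm_num) hν0.le) (by linarith))
          have K1c : (0:ℝ) < (μ-ν) * ν^2 := mul_pos hκ0 (pow_pos hν0 2)
          have K1d : (0:ℝ) ≤ 4*μ*ν*Ek := mul_nonneg (mul_nonneg (mul_nonneg (by norm_num) hμpos.le) hν0.le) hEk0
          nlinarith [K1a, K1b, K1c, K1d]
        · have K2b : (4*μ*ν) * u₀ ≤ (4*μ*ν) * (ν + Ek) :=
            mul_le_mul_of_nonneg_left hu₀E'R (mul_nonneg (mul_nonneg (by norm_num) hμpos.le) hν0.le)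
          have hu₀0 : (0:ℝ) < u₀ := by linarith
          have K2c : (0:ℝ) < 2*ν*(μ-ν)*u₀ := mul_pos (mul_pos (mul_pos (by norm_num) hν0) hκ0) hu₀0
          nlinarith [K1a, K2b, K2c]
      have H6 : ν^2 * Dk ≤ ν^2 * Dr := mul_le_mul_of_nonneg_left hDmonoR (sq_nonneg ν)
      have h7pos : (0:ℝ) ≤ 4*μ*ν^2 := mul_nonneg (mul_nonneg (by norm_num) hμpos.le) (sq_nonneg ν)
      have H7 : (4*μ*ν^2) * (d:ℝ) ≤ (4*μ*ν^2) * (μ - ν) :=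
        mul_le_mul_of_nonneg_left hdleR h7pos
      have H8 : (μ-ν) * ((μ + ν) * Dk) < (μ-ν) * (4*μ*ν*Ek + 4*μ*ν^2) :=
        mul_lt_mul_of_pos_left key1 hκ0
      have hpoly1 : 4*μ*ν^2*Er - ν^2*Dr - 4*μ^2*ν*Ek + μ^2*Dk - 8*(μ-ν)*μ*ν^2 < 0 := by
        nlinarith [H6, H7, H8, hEsplitR]
      have hEqL : Er/μ - Dr/(4*μ^2) - (Ek/ν - Dk/(4*ν^2))
          = (4*μ*ν^2*Er - ν^2*Dr - 4*μ^2*ν*Ek + μ^2*Dk)/(4*μ^2*ν^2) := by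
        field_simp
        ring
      rw [hEqL, div_lt_iff₀ hD4]
      have hmul : 2*(μ-ν)/μ*(4*μ^2*ν^2) = 8*(μ-ν)*μ*ν^2 := by
        field_simp
        ring
      rw [hmul]
      linarith

end Aux

namespace Aux
variable {V : Type} [Fintype V] [DecidableEq V]

lemma del_le (H K : SimpleGraph V) (hKH : K ≤ H) (hn : edgeCount H ≠ 0)
    (P : Finpartition (univ : Finset V)) :
    |modScore K P - modScore H P| ≤ 2 * ((edgeCount H - edgeCount K : ℕ) : ℝ) / (edgeCount H : ℝ) := by
  by_cases h : K = H
  · subst h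
    simp [Nat.sub_self]
  · exact (del H K hKH h P).le

end Aux


/-- Lemma (modularity and edit distance of edge sets): if G = (V, E) and G′ = (V, E′)
are distinct graphs on the same finite vertex set, then for every partition 𝒜 of V,
|q_𝒜(G) − q_𝒜(G′)| < 2·|E △ E′| / max(|E|, |E′|), and moreover
|q*(G) − q*(G′)| < 2·|E △ E′| / max(|E|, |E′|). -/
theorem statement10 (V : Type) [Fintype V] [DecidableEq V] (G G' : SimpleGraph V)
    (hne : G ≠ G') :
    (∀ A : Finpartition (univ : Finset V),
      |modScore G A - modScore G' A| <
        2 * (((symmDiff G.edgeFinset G'.edgeFinset).card : ℝ)) /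
          ((max (edgeCount G) (edgeCount G') : ℕ) : ℝ)) ∧
    |modularity G - modularity G'| <
      2 * (((symmDiff G.edgeFinset G'.edgeFinset).card : ℝ)) /
        ((max (edgeCount G) (edgeCount G') : ℕ) : ℝ) := by
  classical
  have hM : 1 ≤ max (edgeCount G) (edgeCount G') := by
    by_contra h
    push_neg at h
    have h1 : edgeCount G = 0 := by omega
    have h2 : edgeCount G' = 0 := by
      have := le_max_right (edgeCount G) (edgeCount G'); omega
    have e1 : G.edgeFinset = ∅ := Finset.card_eq_zero.mp h1
    have e2 : G'.edgeFinset = ∅ := Finset.card_eq_zero.mp h2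
    exact hne (SimpleGraph.edgeFinset_inj.mp (e1.trans e2.symm))
  set H := G ⊔ G' with hHdef
  have hGH : G ≤ H := le_sup_left
  have hG'H : G' ≤ H := le_sup_right
  have hU : H.edgeFinset = G.edgeFinset ∪ G'.edgeFinset := by
    ext e
    simp [SimpleGraph.mem_edgeFinset, hHdef]
  have hsub : G.edgeFinset ⊆ H.edgeFinset := fun e he => by
    rw [SimpleGraph.mem_edgeFinset] at he ⊢
    exact SimpleGraph.edgeSet_mono hGH he
  have hsub' : G'.edgeFinset ⊆ H.edgeFinset := fun e he => by
    rw [SimpleGraph.mem_edgeFinset] at he ⊢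
    exact SimpleGraph.edgeSet_mono hG'H he
  have hcard : #(H.edgeFinset) = edgeCount H := by
    unfold edgeCount
    congr 1
    ext e
    simp [SimpleGraph.mem_edgeFinset]
  have hcardG : #(G.edgeFinset) = edgeCount G := rfl
  have hcardG' : #(G'.edgeFinset) = edgeCount G' := rfl
  have hnH : max (edgeCount G) (edgeCount G') ≤ edgeCount H := by
    rw [← hcard, ← hcardG, ← hcardG']
    exact max_le (Finset.card_le_card hsub) (Finset.card_le_card hsub')
  have hn1 : 1 ≤ edgeCount H := le_trans hM hnH
  have hn0 : edgeCount H ≠ 0 := by omega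
  have hs : (symmDiff G.edgeFinset G'.edgeFinset).card
      = (edgeCount H - edgeCount G') + (edgeCount H - edgeCount G) := by
    rw [symmDiff_def]
    have hd1 : G.edgeFinset \ G'.edgeFinset = H.edgeFinset \ G'.edgeFinset := by
      rw [hU, Finset.union_sdiff_right]
    have hd2 : G'.edgeFinset \ G.edgeFinset = H.edgeFinset \ G.edgeFinset := by
      rw [hU, Finset.union_sdiff_left]
    show (G.edgeFinset \ G'.edgeFinset ∪ G'.edgeFinset \ G.edgeFinset).card = _
    rw [Finset.card_union_of_disjoint disjoint_sdiff_sdiff, hd1, hd2,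
      Finset.card_sdiff_of_subset hsub, Finset.card_sdiff_of_subset hsub', hcard, hcardG, hcardG']
  have hMpos : (0:ℝ) < ((max (edgeCount G) (edgeCount G') : ℕ) : ℝ) := by
    exact_mod_cast hM
  have hnHpos : (0:ℝ) < ((edgeCount H : ℕ) : ℝ) := by
    exact_mod_cast hn1
  have hdivle : 2 * (((symmDiff G.edgeFinset G'.edgeFinset).card : ℝ)) / ((edgeCount H : ℕ) : ℝ)
      ≤ 2 * (((symmDiff G.edgeFinset G'.edgeFinset).card : ℝ)) /
        ((max (edgeCount G) (edgeCount G') : ℕ) : ℝ) := by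
    apply div_le_div_of_nonneg_left _ hMpos _
    · positivity
    · exact_mod_cast hnH
  have hsR : (((symmDiff G.edgeFinset G'.edgeFinset).card : ℝ))
      = ((edgeCount H - edgeCount G' : ℕ) : ℝ) + ((edgeCount H - edgeCount G : ℕ) : ℝ) := by
    rw [hs]; push_cast; ring
  have main : ∀ A : Finpartition (univ : Finset V),
      |modScore G A - modScore G' A| <
        2 * (((symmDiff G.edgeFinset G'.edgeFinset).card : ℝ)) /
          ((max (edgeCount G) (edgeCount G') : ℕ) : ℝ) := by
    intro A
    refine lt_of_lt_of_le ?_ hdivle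
    have tri : |modScore G A - modScore G' A|
        ≤ |modScore G A - modScore H A| + |modScore G' A - modScore H A| := by
      have h := abs_sub_le (modScore G A) (modScore H A) (modScore G' A)
      rw [abs_sub_comm (modScore H A) (modScore G' A)] at h
      exact h
    by_cases hGH' : G' = H
    · have hGne : G ≠ H := fun hh => hne (hh.trans hGH'.symm)
      have h1 := Aux.del H G hGH hGne A
      have h2 := Aux.del_le H G' hG'H hn0 A
      have : |modScore G A - modScore G' A|
          < 2 * ((edgeCount H - edgeCount G : ℕ) : ℝ) / ((edgeCount H : ℕ) : ℝ)
            + 2 * ((edgeCount H - edgeCount G' : ℕ) : ℝ) / ((edgeCount H : ℕ) : ℝ) :=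
        lt_of_le_of_lt tri (by
          have := add_lt_add_of_lt_of_le (lt_of_le_of_lt (le_refl _) h1) h2
          linarith [h1, h2])
      calc |modScore G A - modScore G' A|
          < 2 * ((edgeCount H - edgeCount G : ℕ) : ℝ) / ((edgeCount H : ℕ) : ℝ)
            + 2 * ((edgeCount H - edgeCount G' : ℕ) : ℝ) / ((edgeCount H : ℕ) : ℝ) := this
        _ = 2 * (((symmDiff G.edgeFinset G'.edgeFinset).card : ℝ)) / ((edgeCount H : ℕ) : ℝ) := by
            rw [hsR]; ring
    · have h1 := Aux.del_le H G hGH hn0 A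
      have h2 := Aux.del H G' hG'H hGH' A
      calc |modScore G A - modScore G' A|
          < 2 * ((edgeCount H - edgeCount G : ℕ) : ℝ) / ((edgeCount H : ℕ) : ℝ)
            + 2 * ((edgeCount H - edgeCount G' : ℕ) : ℝ) / ((edgeCount H : ℕ) : ℝ) := by
            linarith [tri, h1, h2]
        _ = 2 * (((symmDiff G.edgeFinset G'.edgeFinset).card : ℝ)) / ((edgeCount H : ℕ) : ℝ) := by
            rw [hsR]; ring
  refine ⟨main, ?_⟩
  haveI hfin : Finite (Finpartition (univ : Finset V)) :=
    Finite.of_injective (fun P => P.parts) (fun P Q h => Finpartition.ext h)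
  haveI hnem : Nonempty (Finpartition (univ : Finset V)) := by
    have hVne : (univ : Finset V).Nonempty := by
      obtain ⟨e, he⟩ := Finset.card_pos.mp (Nat.pos_of_ne_zero hn0)
      exact ⟨e.out.1, Finset.mem_univ _⟩
    exact ⟨Finpartition.indiscrete (by
      rw [Finset.bot_eq_empty]
      exact Finset.nonempty_iff_ne_empty.mp hVne)⟩
  obtain ⟨P₁, hP₁⟩ := Finite.exists_max (fun P : Finpartition (univ : Finset V) => modScore G P)
  obtain ⟨P₂, hP₂⟩ := Finite.exists_max (fun P : Finpartition (univ : Finset V) => modScore G' P)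
  have bdd1 : BddAbove (Set.range (fun P : Finpartition (univ : Finset V) => modScore G P)) :=
    Set.Finite.bddAbove (Set.finite_range _)
  have bdd2 : BddAbove (Set.range (fun P : Finpartition (univ : Finset V) => modScore G' P)) :=
    Set.Finite.bddAbove (Set.finite_range _)
  have hmod1 : modularity G = modScore G P₁ :=
    le_antisymm (ciSup_le hP₁) (le_ciSup bdd1 P₁)
  have hmod2 : modularity G' = modScore G' P₂ :=
    le_antisymm (ciSup_le hP₂) (le_ciSup bdd2 P₂)
  rw [abs_sub_lt_iff]
  constructor
  · rw [hmod1]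
    have hle : modScore G' P₁ ≤ modularity G' := le_ciSup bdd2 P₁
    have h := main P₁
    rw [abs_sub_lt_iff] at h
    linarith [h.1]
  · rw [hmod2]
    have hle : modScore G P₂ ≤ modularity G := le_ciSup bdd1 P₂
    have h := main P₂
    rw [abs_sub_lt_iff] at h
    linarith [h.2]
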